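/- Let f : [1,∞) → (0,∞) be non-decreasing, and suppose f(x)/e^{kx} is non-decreasing on [N,∞) for some k > 0 and N. Then liminf_{y→∞} (∫_{y−1}^y f(x) dx)/(∫_1^y f(x) dx) ≥ 1 − e^{−k}. -/

import Mathlib

open MeasureTheory Filter

theorem liminf_ratio_exp_lower_bound (f : ℝ → ℝ)
    (hcont : ContinuousOn f (Set.Ici (1 : ℝ))) (hpos : ∀ x ≥ 1, 0 < f x)
    (hmono : MonotoneOn f (Set.Ici (1 : ℝ)))
    (k : ℝ) (hk : 0 < k) (N : ℝ) (hN : 1 ≤ N)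
    (hratio : MonotoneOn (fun x => f x / Real.exp (k * x)) (Set.Ici N)) :
    1 - Real.exp (-k) ≤
      Filter.liminf
        (fun y : ℝ => (∫ x in (y - 1)..y, f x) / ∫ x in (1 : ℝ)..y, f x)
        Filter.atTop := by
  have hf1 : 0 < f 1 := hpos 1 le_rfl
  have hInt : ∀ a b : ℝ, 1 ≤ a → 1 ≤ b → IntervalIntegrable f volume a b := by
    intro a b ha hb
    apply (hcont.mono ?_).intervalIntegrable
    intro x hx
    have : min a b ≤ x := hx.1
    exact le_trans (le_min ha hb) this
  set C := ∫ x in (1:ℝ)..N, f x with hCdef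
  have hC0 : 0 ≤ C := intervalIntegral.integral_nonneg hN (fun x hx => (hpos x hx.1).le)
  -- main eventual inequality
  have hmain : ∀ᶠ y in atTop, ((1 - Real.exp (-k) - C / ((y-1) * f 1)) ≤
      (∫ x in (y - 1)..y, f x) / ∫ x in (1:ℝ)..y, f x) ∧
      (∫ x in (y - 1)..y, f x) / ∫ x in (1:ℝ)..y, f x ≤ 1 := by
    filter_upwards [eventually_ge_atTop (N + 1)] with y hy
    have hy1 : (1:ℝ) ≤ y - 1 := by linarith
    have hyN : N ≤ y - 1 := by linarith
    have hyy : (1:ℝ) ≤ y := by linarith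
    set D := ∫ x in (1:ℝ)..y, f x with hDdef
    have hDlow : (y - 1) * f 1 ≤ D := by
      have h := intervalIntegral.integral_mono_on hyy
        (intervalIntegrable_const) (hInt 1 y le_rfl hyy)
        (fun x hx => hmono (Set.self_mem_Ici) hx.1 hx.1)
      simpa using h
    have hDpos : 0 < D := lt_of_lt_of_le (by nlinarith) hDlow
    have hsplit1 : (∫ x in (1:ℝ)..(y-1), f x) + ∫ x in (y-1)..y, f x = D :=
      intervalIntegral.integral_add_adjacent_intervals
        (hInt 1 (y-1) le_rfl hy1) (hInt (y-1) y hy1 hyy)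
    have hsplit2 : C + (∫ x in N..(y-1), f x) = ∫ x in (1:ℝ)..(y-1), f x :=
      intervalIntegral.integral_add_adjacent_intervals
        (hInt 1 N le_rfl hN) (hInt N (y-1) hN hy1)
    have hpoint : ∀ x ∈ Set.Icc N (y-1), f x ≤ Real.exp (-k) * f (x+1) := by
      intro x hx
      have h1 : f x / Real.exp (k*x) ≤ f (x+1) / Real.exp (k*(x+1)) :=
        hratio hx.1 (by simp only [Set.mem_Ici]; linarith [hx.1]) (by linarith)
      have e1 : 0 < Real.exp (k*x) := Real.exp_pos _
      have e2 : 0 < Real.exp (k*(x+1)) := Real.exp_pos _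
      rw [div_le_div_iff₀ e1 e2] at h1
      have hexp : Real.exp (-k) * Real.exp (k*(x+1)) = Real.exp (k*x) := by
        rw [← Real.exp_add]; ring_nf
      rw [← mul_le_mul_iff_of_pos_right e2]
      calc f x * Real.exp (k*(x+1)) ≤ f (x+1) * Real.exp (k*x) := h1
        _ = Real.exp (-k) * f (x+1) * Real.exp (k*(x+1)) := by rw [← hexp]; ring
    have hshiftcont : ContinuousOn (fun x => f (x+1)) (Set.uIcc N (y-1)) := by
      apply hcont.comp (Continuous.continuousOn (by continuity))
      intro x hx
      have : min N (y-1) ≤ x := hx.1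
      have : (1:ℝ) ≤ x := le_trans (le_min hN hy1) this
      simp only [Set.mem_Ici]; linarith
    have hshiftint : IntervalIntegrable (fun x => Real.exp (-k) * f (x+1)) volume N (y-1) :=
      (hshiftcont.intervalIntegrable).const_mul _
    have hint1 : (∫ x in N..(y-1), f x) ≤ Real.exp (-k) * ∫ x in (N+1)..y, f x := by
      have h := intervalIntegral.integral_mono_on hyN (hInt N (y-1) hN hy1) hshiftint hpoint
      have comp : (∫ x in N..(y-1), f (x + 1)) = ∫ x in (N+1)..(y-1+1), f x :=
        intervalIntegral.integral_comp_add_right f 1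
      rw [intervalIntegral.integral_const_mul, comp] at h
      have : y - 1 + 1 = y := by ring
      rwa [this] at h
    have h3 : (∫ x in (N+1)..y, f x) ≤ D := by
      have hsplit3 : (∫ x in (1:ℝ)..(N+1), f x) + ∫ x in (N+1)..y, f x = D :=
        intervalIntegral.integral_add_adjacent_intervals
          (hInt 1 (N+1) le_rfl (by linarith)) (hInt (N+1) y (by linarith) hyy)
      have hnn : 0 ≤ ∫ x in (1:ℝ)..(N+1), f x :=
        intervalIntegral.integral_nonneg (by linarith) (fun x hx => (hpos x hx.1).le)
      linarith
    have hIbound : (∫ x in (1:ℝ)..(y-1), f x) ≤ C + Real.exp (-k) * D := by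
      have : Real.exp (-k) * (∫ x in (N+1)..y, f x) ≤ Real.exp (-k) * D :=
        mul_le_mul_of_nonneg_left h3 (Real.exp_pos _).le
      linarith
    have hdiv : C / D ≤ C / ((y-1) * f 1) := by
      gcongr
      all_goals nlinarith
    have key : 1 - Real.exp (-k) - C / D ≤ (∫ x in (y - 1)..y, f x) / D := by
      rw [le_div_iff₀ hDpos]
      have hexpand : (1 - Real.exp (-k) - C/D) * D = D - Real.exp (-k)*D - C := by
        rw [sub_mul, sub_mul, div_mul_cancel₀ _ (ne_of_gt hDpos), one_mul]
      rw [hexpand]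
      linarith
    constructor
    · calc 1 - Real.exp (-k) - C / ((y-1) * f 1) ≤ 1 - Real.exp (-k) - C / D := by linarith
        _ ≤ (∫ x in (y - 1)..y, f x) / D := key
    · rw [div_le_one hDpos]
      have hnn : 0 ≤ ∫ x in (1:ℝ)..(y-1), f x :=
        intervalIntegral.integral_nonneg hy1 (fun x hx => (hpos x hx.1).le)
      linarith
  -- the lower bound function tends to 1 - exp(-k)
  have htend : Tendsto (fun y : ℝ => 1 - Real.exp (-k) - C / ((y-1) * f 1)) atTop
      (nhds (1 - Real.exp (-k))) := by
    have h0 : Tendsto (fun y : ℝ => C / ((y-1) * f 1)) atTop (nhds 0) := by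
      apply Tendsto.div_atTop tendsto_const_nhds
      exact (tendsto_atTop_add_const_right _ _ tendsto_id).atTop_mul_const hf1
    simpa using (tendsto_const_nhds (x := 1 - Real.exp (-k))).sub h0
  have hliminfg : Filter.liminf (fun y : ℝ => 1 - Real.exp (-k) - C / ((y-1) * f 1)) atTop
      = 1 - Real.exp (-k) := htend.liminf_eq
  rw [← hliminfg]
  exact Filter.liminf_le_liminf (hmain.mono fun y hy => hy.1) htend.isBoundedUnder_ge
    (Filter.isCoboundedUnder_ge_of_eventually_le atTop (hmain.mono fun y hy => hy.2))
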